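/- Let 1 < r ≤ 2, let a ∈ ℝ and b ≥ 0, and let e be a real random variable whose distribution is symmetric about 0 (e and −e have the same law) with E(|e|^r) < ∞. Then E(|a + b e|^r) ≤ |a|^r + b^r E(|e|^r). -/

import Mathlib

open MeasureTheory

private lemma rpow_subadd {p : ℝ} (hp0 : 0 < p) (hp1 : p ≤ 1) {s t : ℝ} (hs : 0 ≤ s)
    (ht : 0 ≤ t) : (s + t) ^ p ≤ s ^ p + t ^ p := by
  have h := NNReal.rpow_add_rpow_le (q := 1) s.toNNReal t.toNNReal hp0 hp1
  simp only [NNReal.rpow_one, one_div_one] at h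
  have h2 := NNReal.rpow_le_rpow h hp0.le
  rw [← NNReal.rpow_mul, one_div, inv_mul_cancel₀ hp0.ne', NNReal.rpow_one] at h2
  have h3 := NNReal.coe_le_coe.mpr h2
  push_cast [Real.coe_toNNReal _ hs, Real.coe_toNNReal _ ht] at h3
  exact h3

private lemma rpow_concave2 {p : ℝ} (hp0 : 0 < p) (hp1 : p ≤ 1) {s t : ℝ} (hs : 0 ≤ s)
    (ht : 0 ≤ t) : s ^ p + t ^ p ≤ 2 ^ (1 - p) * (s + t) ^ p := by
  have hq : (1:ℝ) ≤ 1/p := by rw [le_div_iff₀ hp0]; linarith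
  have h := NNReal.rpow_arith_mean_le_arith_mean2_rpow (1/2) (1/2) (s.toNNReal ^ p)
    (t.toNNReal ^ p) (add_halves 1) hq
  rw [← NNReal.rpow_mul, ← NNReal.rpow_mul, mul_one_div_cancel hp0.ne', NNReal.rpow_one,
    NNReal.rpow_one] at h
  have h2 := NNReal.rpow_le_rpow h hp0.le
  rw [← NNReal.rpow_mul, one_div_mul_cancel hp0.ne', NNReal.rpow_one] at h2
  have h3 := NNReal.coe_le_coe.mpr h2
  push_cast [Real.coe_toNNReal _ hs, Real.coe_toNNReal _ ht] at h3
  have e1 : ((1:ℝ)/2*s + 1/2*t) ^ p = (1/2:ℝ)^p * (s+t)^p := by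
    rw [← Real.mul_rpow (by norm_num) (by linarith)]; ring_nf
  have e2 : ((1:ℝ)/2)^p = 2 ^ (-p) := by
    rw [one_div, ← Real.rpow_neg_one (2:ℝ), ← Real.rpow_mul (by norm_num : (0:ℝ) ≤ 2),
      neg_one_mul]
  have e3 : (2:ℝ) ^ (1-p) = 2 * 2 ^ (-p) := by
    rw [Real.rpow_sub (by norm_num), Real.rpow_one, Real.rpow_neg (by norm_num), div_eq_mul_inv]
  have hsp : (0:ℝ) ≤ (s+t)^p := Real.rpow_nonneg (by linarith) p
  rw [e1, e2] at h3
  rw [e3]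
  nlinarith [h3]

private lemma abs_rpow_eq_sq_rpow {r : ℝ} (y : ℝ) : |y| ^ r = (y ^ 2) ^ (r / 2) := by
  rw [show r = 2 * (r/2) by ring, Real.rpow_mul (abs_nonneg y),
    show ((2:ℝ)) = ((2:ℕ):ℝ) by norm_num, Real.rpow_natCast, sq_abs]
  norm_num

private lemma key_ptwise {r : ℝ} (hr1 : 1 ≤ r) (hr2 : r ≤ 2) (a x : ℝ) :
    |a + x| ^ r + |a - x| ^ r ≤ 2 * |a| ^ r + 2 * |x| ^ r := by
  set p := r / 2 with hp
  have hp0 : 0 < p := by rw [hp]; linarith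
  have hp1 : p ≤ 1 := by rw [hp]; linarith
  have h1 : ((a+x)^2) ^ p + ((a-x)^2) ^ p ≤ 2^(1-p) * ((a+x)^2 + (a-x)^2) ^ p :=
    rpow_concave2 hp0 hp1 (sq_nonneg _) (sq_nonneg _)
  have h2 : ((a+x)^2 + (a-x)^2 : ℝ) = 2 * (a^2 + x^2) := by ring
  have h3 : (2:ℝ)^(1-p) * (2 * (a^2+x^2)) ^ p = 2 * (a^2+x^2) ^ p := by
    rw [Real.mul_rpow (by norm_num) (by positivity), ← mul_assoc,
      ← Real.rpow_add (by norm_num : (0:ℝ) < 2)]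
    norm_num
  have h4 : ((a^2 + x^2 : ℝ)) ^ p ≤ (a^2) ^ p + (x^2) ^ p :=
    rpow_subadd hp0 hp1 (sq_nonneg _) (sq_nonneg _)
  have e1 := abs_rpow_eq_sq_rpow (r := r) (a + x)
  have e2 := abs_rpow_eq_sq_rpow (r := r) (a - x)
  have e3 := abs_rpow_eq_sq_rpow (r := r) a
  have e4 := abs_rpow_eq_sq_rpow (r := r) x
  rw [e1, e2, e3, e4]
  rw [h2, h3] at h1
  linarith

private lemma sum_rpow_le {r u v : ℝ} (hr : 0 ≤ r) (hu : 0 ≤ u) (hv : 0 ≤ v) :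
    (u + v) ^ r ≤ 2 ^ r * (u ^ r + v ^ r) := by
  have hm : u + v ≤ 2 * max u v := by
    rcases le_total u v with h | h
    · calc u + v ≤ v + v := by linarith
        _ = 2 * v := by ring
        _ ≤ 2 * max u v := by have := le_max_right u v; linarith
    · calc u + v ≤ u + u := by linarith
        _ = 2 * u := by ring
        _ ≤ 2 * max u v := by have := le_max_left u v; linarith
  calc (u + v) ^ r ≤ (2 * max u v) ^ r :=
        Real.rpow_le_rpow (by linarith) hm hr
    _ = 2 ^ r * (max u v) ^ r := Real.mul_rpow (by norm_num) (le_max_of_le_left hu)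
    _ ≤ 2 ^ r * (u ^ r + v ^ r) := by
        gcongr 2 ^ r * ?_
        rcases le_total u v with h | h
        · rw [max_eq_right h]
          nlinarith [Real.rpow_nonneg hu r]
        · rw [max_eq_left h]
          nlinarith [Real.rpow_nonneg hv r]

/-- Let `1 < r ≤ 2`, `a ∈ ℝ`, `b ≥ 0`, and let `e` be a real random
variable whose law is symmetric about `0` (i.e. `e` and `−e` have the same law) with
`E(|e|^r) < ∞`.  Then `E(|a + b e|^r) ≤ |a|^r + b^r E(|e|^r)`. -/
theorem stmt4 {Ω : Type*} [MeasurableSpace Ω] (μ : Measure Ω) [IsProbabilityMeasure μ]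
    (r a b : ℝ) (hr1 : 1 < r) (hr2 : r ≤ 2) (hb : 0 ≤ b)
    (e : Ω → ℝ) (he : Measurable e)
    (hsym : μ.map e = μ.map (fun ω => -e ω))
    (hmom : Integrable (fun ω => |e ω| ^ r) μ) :
    ∫ ω, |a + b * e ω| ^ r ∂μ ≤ |a| ^ r + b ^ r * ∫ ω, |e ω| ^ r ∂μ := by
  have hr0 : (0:ℝ) ≤ r := by linarith
  -- integrable dominating function
  have hg : Integrable (fun ω => 2 ^ r * (|a| ^ r + b ^ r * |e ω| ^ r)) μ := by
    apply Integrable.const_mul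
    exact (integrable_const _).add (hmom.const_mul _)
  have hbound : ∀ s : ℝ, ∀ ω, |a + s * b * e ω| ^ r ≤ 2 ^ r * (|a| ^ r + b ^ r * |e ω| ^ r) →
      True := fun _ _ _ => trivial
  have hptbd : ∀ (c : ℝ), |c| = b → ∀ ω, |a + c * e ω| ^ r ≤
      2 ^ r * (|a| ^ r + b ^ r * |e ω| ^ r) := by
    intro c hc ω
    have h1 : |a + c * e ω| ≤ |a| + b * |e ω| := by
      calc |a + c * e ω| ≤ |a| + |c * e ω| := abs_add_le _ _
        _ = |a| + b * |e ω| := by rw [abs_mul, hc]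
    have h2 : |a + c * e ω| ^ r ≤ (|a| + b * |e ω|) ^ r :=
      Real.rpow_le_rpow (abs_nonneg _) h1 hr0
    have h3 := sum_rpow_le (u := |a|) (v := b * |e ω|) hr0 (abs_nonneg _)
      (mul_nonneg hb (abs_nonneg _))
    rw [Real.mul_rpow hb (abs_nonneg _)] at h3
    linarith
  have meas : ∀ c : ℝ, Measurable fun ω => |a + c * e ω| ^ r := by
    intro c
    exact (Real.continuous_rpow_const hr0).measurable.comp
      (((he.const_mul c).const_add a).abs)
  have hint : ∀ (c : ℝ), |c| = b → Integrable (fun ω => |a + c * e ω| ^ r) μ := by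
    intro c hc
    refine hg.mono' ((meas c).aestronglyMeasurable) ?_
    filter_upwards with ω
    rw [Real.norm_eq_abs, abs_of_nonneg (Real.rpow_nonneg (abs_nonneg _) r)]
    exact hptbd c hc ω
  have hintp := hint b (abs_of_nonneg hb)
  have hintm0 := hint (-b) (by rw [abs_neg, abs_of_nonneg hb])
  have hintm : Integrable (fun ω => |a - b * e ω| ^ r) μ := by
    simpa [neg_mul, ← sub_eq_add_neg] using hintm0
  -- symmetry
  have hsymint : ∫ ω, |a + b * e ω| ^ r ∂μ = ∫ ω, |a - b * e ω| ^ r ∂μ := by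
    have hm : Measurable fun x : ℝ => |a + b * x| ^ r :=
      (Real.continuous_rpow_const hr0).measurable.comp
        (((measurable_id.const_mul b).const_add a).abs)
    have h1 : ∫ x, |a + b * x| ^ r ∂(μ.map e) = ∫ x, |a + b * x| ^ r ∂(μ.map (fun ω => -e ω)) :=
      by rw [hsym]
    rw [integral_map he.aemeasurable hm.aestronglyMeasurable,
      integral_map (φ := fun ω => -e ω) he.neg.aemeasurable hm.aestronglyMeasurable] at h1
    simpa [mul_neg, ← sub_eq_add_neg] using h1
  have hkey : ∀ ω, |a + b * e ω| ^ r + |a - b * e ω| ^ r ≤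
      2 * |a| ^ r + 2 * (b ^ r * |e ω| ^ r) := by
    intro ω
    have := key_ptwise (le_of_lt hr1) hr2 a (b * e ω)
    rw [abs_mul, abs_of_nonneg hb, Real.mul_rpow hb (abs_nonneg _)] at this
    linarith
  have hsum : ∫ ω, (|a + b * e ω| ^ r + |a - b * e ω| ^ r) ∂μ ≤
      ∫ ω, (2 * |a| ^ r + 2 * (b ^ r * |e ω| ^ r)) ∂μ := by
    refine integral_mono (hintp.add hintm) ?_ hkey
    exact (integrable_const _).add ((hmom.const_mul _).const_mul 2)
  rw [integral_add hintp hintm] at hsum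
  rw [integral_add (integrable_const _) ((hmom.const_mul (b ^ r)).const_mul 2)] at hsum
  rw [integral_const, integral_const_mul, integral_const_mul] at hsum
  simp only [probReal_univ, measure_univ, ENNReal.toReal_one, smul_eq_mul, one_mul] at hsum
  rw [← hsymint] at hsum
  linarith
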